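/- arXiv:1211.6083 — 2 statements merged into one kernel-verified Lean document; each statement's English description precedes it below -/
import Mathlib

section
/- Let d ≥ 2 and let Q ∈ Sym₀(d) with ψ(Q) < ∞. If ρ₁ and ρ₂ are both minimizers of the entropy over A_Q, i.e. ρ₁, ρ₂ ∈ A_Q with ρᵢ log ρᵢ σ-integrable and ∫_{S^{d−1}} ρᵢ log ρᵢ dσ = ψ(Q) for i = 1, 2, then ρ₁ = ρ₂ σ-almost everywhere on S^{d−1}. -/
open MeasureTheory Matrix

noncomputable section

/-- The unit sphere `S^{d-1} ⊂ ℝ^d`. -/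
abbrev Sph (d : ℕ) := Metric.sphere (0 : EuclideanSpace ℝ (Fin d)) 1

/-- The surface (spherical) measure `σ` on the unit sphere `S^{d-1}`. -/
noncomputable def sphMeasure (d : ℕ) : Measure (Sph d) :=
  (volume : Measure (EuclideanSpace ℝ (Fin d))).toSphere

/-- The Q-tensor of a density `f` on the sphere:
`Q_f = ∫_{S^{d-1}} (ω ⊗ ω - (1/d) I) f(ω) dσ(ω)`, defined entrywise. -/
noncomputable def Qtensor (d : ℕ) (f : Sph d → ℝ) : Matrix (Fin d) (Fin d) ℝ :=
  Matrix.of fun i j =>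
    ∫ ω : Sph d,
      ((ω : EuclideanSpace ℝ (Fin d)) i * (ω : EuclideanSpace ℝ (Fin d)) j
        - if i = j then (1 : ℝ) / d else 0) * f ω ∂(sphMeasure d)

/-- The class `A_Q` of probability densities on the sphere whose Q-tensor is `Q`. -/
def densityClass (d : ℕ) (Q : Matrix (Fin d) (Fin d) ℝ) (ρ : Sph d → ℝ) : Prop :=
  Integrable ρ (sphMeasure d) ∧ (∀ ω, 0 ≤ ρ ω) ∧
    (∫ ω, ρ ω ∂(sphMeasure d)) = 1 ∧ Qtensor d ρ = Q

/-- The entropy `∫_{S^{d-1}} ρ log ρ dσ` of a density `ρ`. -/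
noncomputable def entropy (d : ℕ) (ρ : Sph d → ℝ) : ℝ :=
  ∫ ω, ρ ω * Real.log (ρ ω) ∂(sphMeasure d)

/-- The Ball–Majumdar singular potential
`ψ(Q) := inf { ∫ ρ log ρ dσ : ρ ∈ A_Q, ρ log ρ σ-integrable }`, valued in `ℝ ∪ {+∞}`
(realised as `EReal`, with `sInf ∅ = +∞`). -/
noncomputable def BMpsi (d : ℕ) (Q : Matrix (Fin d) (Fin d) ℝ) : EReal :=
  sInf { x : EReal | ∃ ρ : Sph d → ℝ, densityClass d Q ρ ∧
    Integrable (fun ω => ρ ω * Real.log (ρ ω)) (sphMeasure d) ∧ x = (entropy d ρ : EReal) }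
lemma coord_abs_le (d : ℕ) (ω : Sph d) (i : Fin d) :
    |(ω : EuclideanSpace ℝ (Fin d)) i| ≤ 1 := by
  have h := abs_real_inner_le_norm
    (EuclideanSpace.single i (1 : ℝ)) (ω : EuclideanSpace ℝ (Fin d))
  rw [EuclideanSpace.inner_single_left] at h
  have hω : ‖(ω : EuclideanSpace ℝ (Fin d))‖ = 1 := by
    simpa using mem_sphere_zero_iff_norm.mp ω.2
  simpa [EuclideanSpace.norm_single, hω] using h

lemma mul_log_ge_neg_one {x : ℝ} (hx : 0 ≤ x) : -1 ≤ x * Real.log x := by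
  rcases eq_or_lt_of_le hx with h | h
  · simp [← h]
  · have hinv : Real.log x⁻¹ ≤ x⁻¹ - 1 := Real.log_le_sub_one_of_pos (by positivity)
    rw [Real.log_inv] at hinv
    have h2 : x * (1 - x⁻¹) ≤ x * Real.log x :=
      mul_le_mul_of_nonneg_left (by linarith) hx
    have h3 : x * x⁻¹ = 1 := mul_inv_cancel₀ h.ne'
    nlinarith

lemma coord_continuous (d : ℕ) (i : Fin d) :
    Continuous fun ω : Sph d => (ω : EuclideanSpace ℝ (Fin d)) i :=
  (EuclideanSpace.proj (𝕜 := ℝ) i).continuous.comp continuous_subtype_val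

lemma integrable_kernel_mul (d : ℕ) (i j : Fin d) {f : Sph d → ℝ}
    (hf : Integrable f (sphMeasure d)) :
    Integrable (fun ω : Sph d =>
      ((ω : EuclideanSpace ℝ (Fin d)) i * (ω : EuclideanSpace ℝ (Fin d)) j
        - if i = j then (1 : ℝ) / d else 0) * f ω) (sphMeasure d) := by
  refine hf.bdd_mul (c := 2) ?_ (Filter.Eventually.of_forall fun ω => ?_)
  · exact (((coord_continuous d i).mul (coord_continuous d j)).sub
      continuous_const).aestronglyMeasurable
  · have h1 := coord_abs_le d ω i
    have h2 := coord_abs_le d ω j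
    have hij : |(if i = j then (1 : ℝ) / d else 0)| ≤ 1 := by
      split <;> simp [abs_of_nonneg]
      · rcases Nat.eq_zero_or_pos d with h | h
        · simp [h]
        · rw [inv_le_one_iff₀]
          right
          exact_mod_cast Nat.one_le_iff_ne_zero.mpr h.ne'
    have hm : |(ω : EuclideanSpace ℝ (Fin d)) i * (ω : EuclideanSpace ℝ (Fin d)) j| ≤ 1 := by
      rw [abs_mul]
      calc |(ω : EuclideanSpace ℝ (Fin d)) i| * |(ω : EuclideanSpace ℝ (Fin d)) j|
          ≤ 1 * 1 := mul_le_mul h1 h2 (abs_nonneg _) zero_le_one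
        _ = 1 := one_mul 1
    calc ‖(ω : EuclideanSpace ℝ (Fin d)) i * (ω : EuclideanSpace ℝ (Fin d)) j
            - if i = j then (1 : ℝ) / d else 0‖
        ≤ |(ω : EuclideanSpace ℝ (Fin d)) i * (ω : EuclideanSpace ℝ (Fin d)) j|
          + |(if i = j then (1 : ℝ) / d else 0)| := abs_sub _ _
      _ ≤ 2 := by linarith

/-- Uniqueness of the entropy minimiser: if `Q ∈ Sym₀(d)` has `ψ(Q) < ∞`
and `ρ₁, ρ₂ ∈ A_Q` both attain the infimum defining `ψ(Q)`, then `ρ₁ = ρ₂`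
σ-almost everywhere on `S^{d-1}`. -/
theorem entropy_minimizer_unique (d : ℕ) (hd : 2 ≤ d)
    (Q : Matrix (Fin d) (Fin d) ℝ) (hQsym : Qᵀ = Q) (hQtr : Q.trace = 0)
    (hfin : BMpsi d Q < ⊤)
    (ρ₁ ρ₂ : Sph d → ℝ)
    (h₁ : densityClass d Q ρ₁)
    (h₁ent : Integrable (fun ω => ρ₁ ω * Real.log (ρ₁ ω)) (sphMeasure d))
    (h₁min : (entropy d ρ₁ : EReal) = BMpsi d Q)
    (h₂ : densityClass d Q ρ₂)
    (h₂ent : Integrable (fun ω => ρ₂ ω * Real.log (ρ₂ ω)) (sphMeasure d))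
    (h₂min : (entropy d ρ₂ : EReal) = BMpsi d Q) :
    ρ₁ =ᵐ[sphMeasure d] ρ₂ := by
  classical
  haveI : IsFiniteMeasure (sphMeasure d) := by unfold sphMeasure; infer_instance
  obtain ⟨h₁int, h₁nn, h₁mass, h₁Q⟩ := h₁
  obtain ⟨h₂int, h₂nn, h₂mass, h₂Q⟩ := h₂
  set ρ : Sph d → ℝ := fun ω => (ρ₁ ω + ρ₂ ω) / 2 with hρdef
  have hρint : Integrable ρ (sphMeasure d) := (h₁int.add h₂int).div_const 2
  have hρnn : ∀ ω, 0 ≤ ρ ω := fun ω => by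
    have := h₁nn ω; have := h₂nn ω; simp only [hρdef]; positivity
  have hρmass : (∫ ω, ρ ω ∂(sphMeasure d)) = 1 := by
    simp only [hρdef, integral_div, integral_add h₁int h₂int, h₁mass, h₂mass]
    norm_num
  have hρQ : Qtensor d ρ = Q := by
    ext i j
    have hk1 := integrable_kernel_mul d i j h₁int
    have hk2 := integrable_kernel_mul d i j h₂int
    have hval : (Qtensor d ρ) i j
        = ((Qtensor d ρ₁) i j + (Qtensor d ρ₂) i j) / 2 := by
      show (∫ ω : Sph d,
          ((ω : EuclideanSpace ℝ (Fin d)) i * (ω : EuclideanSpace ℝ (Fin d)) j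
            - if i = j then (1 : ℝ) / d else 0) * ρ ω ∂(sphMeasure d)) = _
      have : ∀ ω : Sph d,
          ((ω : EuclideanSpace ℝ (Fin d)) i * (ω : EuclideanSpace ℝ (Fin d)) j
            - if i = j then (1 : ℝ) / d else 0) * ρ ω
          = (((ω : EuclideanSpace ℝ (Fin d)) i * (ω : EuclideanSpace ℝ (Fin d)) j
            - if i = j then (1 : ℝ) / d else 0) * ρ₁ ω
            + ((ω : EuclideanSpace ℝ (Fin d)) i * (ω : EuclideanSpace ℝ (Fin d)) j
            - if i = j then (1 : ℝ) / d else 0) * ρ₂ ω) / 2 := by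
        intro ω; simp only [hρdef]; ring
      rw [integral_congr_ae (Filter.Eventually.of_forall this), integral_div,
        integral_add hk1 hk2]
      rfl
    rw [hval, h₁Q, h₂Q]
    ring
  -- entropy convexity
  have hconv : ∀ ω, ρ ω * Real.log (ρ ω)
      ≤ (ρ₁ ω * Real.log (ρ₁ ω) + ρ₂ ω * Real.log (ρ₂ ω)) / 2 := by
    intro ω
    have h := Real.convexOn_mul_log.2 (Set.mem_Ici.mpr (h₁nn ω)) (Set.mem_Ici.mpr (h₂nn ω))
      (by norm_num : (0:ℝ) ≤ 1/2) (by norm_num : (0:ℝ) ≤ 1/2) (by norm_num)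
    simp only [smul_eq_mul] at h
    have he : (1/2 : ℝ) * ρ₁ ω + (1/2 : ℝ) * ρ₂ ω = ρ ω := by simp only [hρdef]; ring
    rw [he] at h
    linarith
  have hρlogmeas : AEStronglyMeasurable (fun ω => ρ ω * Real.log (ρ ω)) (sphMeasure d) :=
    Real.continuous_mul_log.comp_aestronglyMeasurable hρint.aestronglyMeasurable
  have hρlogint : Integrable (fun ω => ρ ω * Real.log (ρ ω)) (sphMeasure d) := by
    have hbint : Integrable (fun ω => 1 + |(ρ₁ ω * Real.log (ρ₁ ω)
        + ρ₂ ω * Real.log (ρ₂ ω)) / 2|) (sphMeasure d) :=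
      (integrable_const 1).add ((h₁ent.add h₂ent).div_const 2).abs
    refine hbint.mono hρlogmeas (Filter.Eventually.of_forall fun ω => ?_)
    have hlo := mul_log_ge_neg_one (hρnn ω)
    have hhi := hconv ω
    have habs : |(ρ₁ ω * Real.log (ρ₁ ω) + ρ₂ ω * Real.log (ρ₂ ω)) / 2|
        ≥ (ρ₁ ω * Real.log (ρ₁ ω) + ρ₂ ω * Real.log (ρ₂ ω)) / 2 := le_abs_self _
    rw [Real.norm_eq_abs, Real.norm_eq_abs, abs_le]
    constructor
    · have : (0:ℝ) ≤ |(ρ₁ ω * Real.log (ρ₁ ω) + ρ₂ ω * Real.log (ρ₂ ω)) / 2| := abs_nonneg _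
      rw [abs_of_nonneg (by linarith : (0:ℝ) ≤ 1 + |(ρ₁ ω * Real.log (ρ₁ ω)
        + ρ₂ ω * Real.log (ρ₂ ω)) / 2|)]
      linarith
    · rw [abs_of_nonneg (by positivity : (0:ℝ) ≤ 1 + |(ρ₁ ω * Real.log (ρ₁ ω)
        + ρ₂ ω * Real.log (ρ₂ ω)) / 2|)]
      linarith
  -- ρ is admissible, so its entropy dominates the infimum
  have hle : BMpsi d Q ≤ (entropy d ρ : EReal) :=
    sInf_le ⟨ρ, ⟨hρint, hρnn, hρmass, hρQ⟩, hρlogint, rfl⟩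
  have h12 : entropy d ρ₂ = entropy d ρ₁ := by
    have := h₁min.trans h₂min.symm
    exact_mod_cast this.symm
  have hmle : entropy d ρ₁ ≤ entropy d ρ := by
    have h' : (entropy d ρ₁ : EReal) ≤ (entropy d ρ : EReal) := by rw [h₁min]; exact hle
    exact_mod_cast h'
  -- the deficit function
  set g : Sph d → ℝ := fun ω =>
    (ρ₁ ω * Real.log (ρ₁ ω) + ρ₂ ω * Real.log (ρ₂ ω)) / 2 - ρ ω * Real.log (ρ ω) with hgdef
  have hgnn : ∀ ω, 0 ≤ g ω := fun ω => by
    have := hconv ω; simp only [hgdef]; linarith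
  have hgint : Integrable g (sphMeasure d) := ((h₁ent.add h₂ent).div_const 2).sub hρlogint
  have hgzero : (∫ ω, g ω ∂(sphMeasure d)) = 0 := by
    have hcalc : (∫ ω, g ω ∂(sphMeasure d))
        = (entropy d ρ₁ + entropy d ρ₂) / 2 - entropy d ρ := by
      have hI : Integrable (fun ω => (ρ₁ ω * Real.log (ρ₁ ω)
          + ρ₂ ω * Real.log (ρ₂ ω)) / 2) (sphMeasure d) := (h₁ent.add h₂ent).div_const 2
      simp only [hgdef]
      rw [integral_sub hI hρlogint, integral_div, integral_add h₁ent h₂ent]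
      rfl
    have hnn : 0 ≤ ∫ ω, g ω ∂(sphMeasure d) :=
      integral_nonneg hgnn
    rw [hcalc, h12] at hnn ⊢
    linarith
  have hgae : g =ᵐ[sphMeasure d] 0 := by
    have := (integral_eq_zero_iff_of_nonneg hgnn hgint).mp hgzero
    exact this
  refine hgae.mono fun ω hω => ?_
  by_contra hne
  have hs := Real.strictConvexOn_mul_log.2 (Set.mem_Ici.mpr (h₁nn ω))
    (Set.mem_Ici.mpr (h₂nn ω)) hne (by norm_num : (0:ℝ) < 1/2)
    (by norm_num : (0:ℝ) < 1/2) (by norm_num)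
  simp only [smul_eq_mul] at hs
  have he : (1/2 : ℝ) * ρ₁ ω + (1/2 : ℝ) * ρ₂ ω = ρ ω := by simp only [hρdef]; ring
  rw [he] at hs
  have : g ω = 0 := hω
  simp only [hgdef] at this
  linarith
end
end

section
/- Let d = 2 or 3, Λ > 0, L > 0, let u : ℝᵈ → ℝᵈ be smooth, I^d-periodic and divergence-free, and let Q : ℝᵈ → ℝ^{d×d} be smooth, I^d-periodic and symmetric-matrix valued. Then (with summation over repeated indices) L ∫_{I^d} Δu_i ∂_j( ∂_i Q_{mn} ∂_j Q_{nm} ) dx − L ∫_{I^d} ΔQ : Δ((u·∇)Q) dx = 2L ∫_{I^d} ∂_k(ΔQ) : (u·∇)(∂_k Q) dx. -/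
open Matrix MeasureTheory

attribute [local instance] Matrix.normedAddCommGroup Matrix.normedSpace

noncomputable section

/-- The `m`-th partial derivative of a map defined on `ℝ^d`. -/
noncomputable def pderiv' {d : ℕ} {M : Type*} [NormedAddCommGroup M] [NormedSpace ℝ M]
    (m : Fin d) (F : (Fin d → ℝ) → M) (x : Fin d → ℝ) : M :=
  fderiv ℝ F x (Pi.single m 1)

/-- The Laplacian `Δ = Σ_m ∂_m ∂_m` of a map defined on `ℝ^d`. -/
noncomputable def lap' {d : ℕ} {M : Type*} [NormedAddCommGroup M] [NormedSpace ℝ M]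
    (F : (Fin d → ℝ) → M) (x : Fin d → ℝ) : M :=
  ∑ m : Fin d, pderiv' m (pderiv' m F) x

/-- The fundamental cube `I^d = [-Λπ/2, Λπ/2]^d`. -/
def cube (d : ℕ) (Λ : ℝ) : Set (Fin d → ℝ) :=
  Set.Icc (fun _ => -(Λ * Real.pi / 2)) (fun _ => Λ * Real.pi / 2)

/-- A map on `ℝ^d` is `I^d`-periodic if it is `Λπ`-periodic in each coordinate. -/
def IsCubePeriodic {d : ℕ} {M : Type*} (Λ : ℝ) (F : (Fin d → ℝ) → M) : Prop :=
  ∀ (x : Fin d → ℝ) (m : Fin d), F (x + (Λ * Real.pi) • (Pi.single m 1 : Fin d → ℝ)) = F x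

variable {d : ℕ} {M : Type*} [NormedAddCommGroup M] [NormedSpace ℝ M]

lemma ContDiff.pderiv' {F : (Fin d → ℝ) → M} (hf : ContDiff ℝ (⊤:ℕ∞) F) (m : Fin d) :
    ContDiff ℝ (⊤:ℕ∞) (pderiv' m F) := by
  have h := (hf.fderiv_right (m := (⊤:ℕ∞)) (by simp))
  exact h.clm_apply contDiff_const

lemma IsCubePeriodic.pderiv' {Λ : ℝ} {F : (Fin d → ℝ) → M} (hf : ContDiff ℝ (⊤:ℕ∞) F)
    (hp : IsCubePeriodic Λ F) (m : Fin d) : IsCubePeriodic Λ (pderiv' m F) := by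
  intro x k
  unfold _root_.pderiv'
  congr 1
  have h1 : (fun y : Fin d → ℝ => F (y + (Λ * Real.pi) • (Pi.single k 1 : Fin d → ℝ))) = F := by
    funext y; exact hp y k
  have h2 : HasFDerivAt (fun y : Fin d → ℝ => F (y + (Λ * Real.pi) • (Pi.single k 1 : Fin d → ℝ)))
      (fderiv ℝ F (x + (Λ * Real.pi) • (Pi.single k 1 : Fin d → ℝ))) x := by
    have := ((hf.differentiable (by simp)) _).hasFDerivAt.comp x
      ((hasFDerivAt_id x).add_const ((Λ * Real.pi) • (Pi.single k 1 : Fin d → ℝ)))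
    simp only [ContinuousLinearMap.comp_id] at this
    exact this
  rw [h1] at h2
  exact (h2.fderiv).symm

lemma pderiv'_sum {ι : Type*} {s : Finset ι} {F : ι → (Fin d → ℝ) → M}
    (hf : ∀ i ∈ s, DifferentiableAt ℝ (F i) x) (m : Fin d) :
    pderiv' m (fun y => ∑ i ∈ s, F i y) x = ∑ i ∈ s, pderiv' m (F i) x := by
  unfold pderiv'
  rw [fderiv_fun_sum hf]
  simp

lemma pderiv'_mul {f g : (Fin d → ℝ) → ℝ} {x : Fin d → ℝ} (hf : DifferentiableAt ℝ f x)
    (hg : DifferentiableAt ℝ g x) (m : Fin d) :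
    pderiv' m (fun y => f y * g y) x = pderiv' m f x * g x + f x * pderiv' m g x := by
  unfold pderiv'
  rw [fderiv_fun_mul hf hg]
  simp [mul_comm]
  ring

lemma pderiv'_pderiv' {f : (Fin d → ℝ) → M} (hf : ContDiff ℝ (⊤:ℕ∞) f) (i j : Fin d)
    (x : Fin d → ℝ) :
    pderiv' i (pderiv' j f) x = fderiv ℝ (fderiv ℝ f) x (Pi.single i 1) (Pi.single j 1) := by
  unfold pderiv'
  rw [fderiv_clm_apply ((hf.fderiv_right (m := (⊤:ℕ∞)) (by simp)).differentiable (by simp) x)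
    (differentiableAt_const _)]
  simp

lemma pderiv'_comm {f : (Fin d → ℝ) → M} (hf : ContDiff ℝ (⊤:ℕ∞) f) (i j : Fin d)
    (x : Fin d → ℝ) :
    pderiv' i (pderiv' j f) x = pderiv' j (pderiv' i f) x := by
  rw [pderiv'_pderiv' hf, pderiv'_pderiv' hf]
  exact second_derivative_symmetric (f := f) (fun y => ((hf.differentiable (by simp)) y).hasFDerivAt)
    (((hf.fderiv_right (m := (⊤:ℕ∞)) (by simp)).differentiable (by simp) x).hasFDerivAt) _ _

/-- Evaluation of a matrix at an entry, as a continuous linear map. -/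
def entryCLM (d : ℕ) (m n : Fin d) : Matrix (Fin d) (Fin d) ℝ →L[ℝ] ℝ :=
  (ContinuousLinearMap.proj (R := ℝ) (φ := fun _ : Fin d => ℝ) n).comp
    (ContinuousLinearMap.proj (R := ℝ) (φ := fun _ : Fin d => Fin d → ℝ) m)

@[simp] lemma entryCLM_apply {m n : Fin d} (A : Matrix (Fin d) (Fin d) ℝ) :
    entryCLM d m n A = A m n := rfl

lemma pderiv'_entry {Q : (Fin d → ℝ) → Matrix (Fin d) (Fin d) ℝ} {x : Fin d → ℝ}
    (hQ : DifferentiableAt ℝ Q x) (i m n : Fin d) :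
    pderiv' i Q x m n = pderiv' i (fun y => Q y m n) x := by
  have h : HasFDerivAt (fun y => entryCLM d m n (Q y))
      ((entryCLM d m n).comp (fderiv ℝ Q x)) x :=
    (entryCLM d m n).hasFDerivAt.comp x hQ.hasFDerivAt
  unfold pderiv'
  have h2 : fderiv ℝ (fun y => Q y m n) x = (entryCLM d m n).comp (fderiv ℝ Q x) := h.fderiv
  rw [h2]
  rfl

variable {N : Type*} [NormedAddCommGroup N] [NormedSpace ℝ N]

lemma pderiv'_clm_comp (e : M →L[ℝ] N) {F : (Fin d → ℝ) → M} {x : Fin d → ℝ}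
    (hF : DifferentiableAt ℝ F x) (i : Fin d) :
    pderiv' i (fun y => e (F y)) x = e (pderiv' i F x) := by
  unfold pderiv'
  have h : fderiv ℝ (fun y => e (F y)) x = e.comp (fderiv ℝ F x) :=
    (e.hasFDerivAt.comp x hF.hasFDerivAt).fderiv
  rw [h]
  rfl

lemma ContDiff.lap' {F : (Fin d → ℝ) → M} (hf : ContDiff ℝ (⊤:ℕ∞) F) :
    ContDiff ℝ (⊤:ℕ∞) (lap' F) := by
  unfold _root_.lap'
  exact ContDiff.sum fun m _ => (hf.pderiv' m).pderiv' m

lemma IsCubePeriodic.lap' {Λ : ℝ} {F : (Fin d → ℝ) → M} (hf : ContDiff ℝ (⊤:ℕ∞) F)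
    (hp : IsCubePeriodic Λ F) : IsCubePeriodic Λ (lap' F) := by
  intro x k
  unfold _root_.lap'
  exact Finset.sum_congr rfl fun m _ => (hp.pderiv' hf m).pderiv' (hf.pderiv' m) m x k

lemma IsCubePeriodic.mul {Λ : ℝ} {f g : (Fin d → ℝ) → ℝ} (hf : IsCubePeriodic Λ f)
    (hg : IsCubePeriodic Λ g) : IsCubePeriodic Λ (fun y => f y * g y) := fun x k => by
  simp [hf x k, hg x k]

lemma IsCubePeriodic.sum {ι : Type*} {s : Finset ι} {Λ : ℝ} {F : ι → (Fin d → ℝ) → ℝ}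
    (hf : ∀ i ∈ s, IsCubePeriodic Λ (F i)) :
    IsCubePeriodic Λ (fun y => ∑ i ∈ s, F i y) := fun x k =>
  Finset.sum_congr rfl fun i hi => hf i hi x k

lemma lap'_clm_comp (e : M →L[ℝ] N) {F : (Fin d → ℝ) → M} (hF : ContDiff ℝ (⊤:ℕ∞) F)
    (x : Fin d → ℝ) : lap' (fun y => e (F y)) x = e (lap' F x) := by
  unfold _root_.lap'
  rw [map_sum]
  refine Finset.sum_congr rfl fun m _ => ?_
  have h1 : (pderiv' m fun y => e (F y)) = fun y => e (pderiv' m F y) := by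
    funext y; exact pderiv'_clm_comp e ((hF.differentiable (by simp)) y) m
  calc pderiv' m (pderiv' m fun y => e (F y)) x
      = pderiv' m (fun y => e (pderiv' m F y)) x := by rw [h1]
    _ = e (pderiv' m (pderiv' m F) x) :=
        pderiv'_clm_comp e (((hF.pderiv' m).differentiable (by simp)) x) m

lemma insertNth_add_single {n : ℕ} (j : Fin (n+1)) (c T : ℝ) (y : Fin n → ℝ) :
    j.insertNth (c + T) y = j.insertNth c y + T • (Pi.single j 1 : Fin (n+1) → ℝ) := by
  funext i
  refine Fin.succAboveCases j ?_ ?_ i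
  · simp
  · intro k
    simp [Fin.insertNth_apply_succAbove, Pi.single_eq_of_ne (Fin.succAbove_ne j k)]

lemma cont_integrableOn_cube {d : ℕ} {Λ : ℝ} {h : (Fin d → ℝ) → ℝ} (hh : Continuous h) :
    IntegrableOn h (cube d Λ) := by
  unfold cube
  exact hh.integrableOn_Icc

lemma integral_pderiv'_eq_zero {n : ℕ} {Λ : ℝ} (hΛ : 0 ≤ Λ)
    {f : (Fin (n+1) → ℝ) → ℝ} (hf : ContDiff ℝ (⊤:ℕ∞) f)
    (hper : IsCubePeriodic Λ f) (j : Fin (n+1)) :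
    ∫ x in cube (n+1) Λ, pderiv' j f x = 0 := by
  set a : Fin (n+1) → ℝ := fun _ => -(Λ * Real.pi / 2) with ha
  set b : Fin (n+1) → ℝ := fun _ => Λ * Real.pi / 2 with hb
  have hle : a ≤ b := by
    intro i
    simp only [ha, hb]
    nlinarith [Real.pi_pos, mul_nonneg hΛ Real.pi_pos.le]
  have hdiff : Differentiable ℝ f := hf.differentiable (by simp)
  have hkey := MeasureTheory.integral_divergence_of_hasFDerivAt_off_countable'
    (a := a) (b := b) hle
    (f := fun i x => if i = j then f x else 0)
    (f' := fun i x => if i = j then fderiv ℝ f x else 0)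
    (s := (∅ : Set (Fin (n+1) → ℝ))) Set.countable_empty
    (fun i => by
      by_cases h : i = j <;> simp [h, (hf.continuous).continuousOn, continuousOn_const])
    (fun x _ i => by
      by_cases h : i = j
      · simpa [h] using (hdiff x).hasFDerivAt
      · simpa [h] using hasFDerivAt_const (0:ℝ) x)
    (by
      have : (fun x : Fin (n+1) → ℝ =>
          ∑ i, (if i = j then fderiv ℝ f x else 0) (Pi.single i 1)) = pderiv' j f := by
        funext x
        rw [Finset.sum_eq_single j] <;> simp [pderiv']
        intro i hi; simp [hi]
      rw [this]
      exact ((hf.pderiv' j).continuous).integrableOn_Icc)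
  have hsum : (fun x : Fin (n+1) → ℝ =>
      ∑ i, (if i = j then fderiv ℝ f x else 0) (Pi.single i 1)) = pderiv' j f := by
    funext x
    rw [Finset.sum_eq_single j] <;> simp [pderiv']
    intro i hi; simp [hi]
  rw [hsum] at hkey
  have hcube : cube (n+1) Λ = Set.Icc a b := rfl
  rw [hcube, hkey]
  refine Finset.sum_eq_zero fun i _ => ?_
  by_cases h : i = j
  · subst h
    have hface : ∀ y : Fin n → ℝ,
        f (i.insertNth (b i) y) = f (i.insertNth (a i) y) := by
      intro y
      have : b i = a i + Λ * Real.pi := by simp [ha, hb]; ring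
      rw [this, insertNth_add_single, hper]
    simp only [if_pos rfl, hface, sub_self]
  · simp [h]

lemma integral_pderiv'_mul {n : ℕ} {Λ : ℝ} (hΛ : 0 ≤ Λ)
    {f g : (Fin (n+1) → ℝ) → ℝ} (hf : ContDiff ℝ (⊤:ℕ∞) f) (hg : ContDiff ℝ (⊤:ℕ∞) g)
    (hfp : IsCubePeriodic Λ f) (hgp : IsCubePeriodic Λ g) (j : Fin (n+1)) :
    ∫ x in cube (n+1) Λ, pderiv' j f x * g x
      = - ∫ x in cube (n+1) Λ, f x * pderiv' j g x := by
  have h0 := integral_pderiv'_eq_zero hΛ (hf.mul hg) (hfp.mul hgp) j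
  have hexp : ∀ x : Fin (n+1) → ℝ, pderiv' j (fun y => f y * g y) x
      = pderiv' j f x * g x + f x * pderiv' j g x := fun x =>
    pderiv'_mul (hf.differentiable (by simp) x) (hg.differentiable (by simp) x) j
  simp only [hexp] at h0
  rw [MeasureTheory.integral_add
    (cont_integrableOn_cube (((hf.pderiv' j).continuous).fun_mul hg.continuous))
    (cont_integrableOn_cube (hf.continuous.fun_mul ((hg.pderiv' j).continuous)))] at h0
  linarith

lemma integral_advection_eq_zero {n : ℕ} {Λ : ℝ} (hΛ : 0 ≤ Λ)
    {v : Fin (n+1) → (Fin (n+1) → ℝ) → ℝ} (hv : ∀ i, ContDiff ℝ (⊤:ℕ∞) (v i))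
    (hvp : ∀ i, IsCubePeriodic Λ (v i))
    (hdiv : ∀ x, ∑ i, pderiv' i (v i) x = 0)
    {φ : (Fin (n+1) → ℝ) → ℝ} (hφ : ContDiff ℝ (⊤:ℕ∞) φ) (hφp : IsCubePeriodic Λ φ) :
    ∫ x in cube (n+1) Λ, ∑ i, v i x * pderiv' i φ x = 0 := by
  rw [MeasureTheory.integral_finset_sum _ (fun i _ =>
    cont_integrableOn_cube ((hv i).continuous.fun_mul ((hφ.pderiv' i).continuous)))]
  have hterm : ∀ i : Fin (n+1), ∫ x in cube (n+1) Λ, v i x * pderiv' i φ x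
      = - ∫ x in cube (n+1) Λ, pderiv' i (v i) x * φ x := by
    intro i
    have := integral_pderiv'_mul hΛ (hv i) hφ (hvp i) hφp i
    linarith
  simp only [hterm]
  rw [Finset.sum_neg_distrib, neg_eq_zero,
    ← MeasureTheory.integral_finset_sum _ (fun i _ =>
      cont_integrableOn_cube (((hv i).pderiv' i).continuous.fun_mul hφ.continuous))]
  have hz : ∀ x : Fin (n+1) → ℝ, ∑ i, pderiv' i (v i) x * φ x = 0 := by
    intro x; rw [← Finset.sum_mul, hdiv x, zero_mul]
  simp only [hz, MeasureTheory.integral_zero]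

lemma pderiv'_add {f g : (Fin d → ℝ) → ℝ} {x : Fin d → ℝ} (hf : DifferentiableAt ℝ f x)
    (hg : DifferentiableAt ℝ g x) (m : Fin d) :
    pderiv' m (fun y => f y + g y) x = pderiv' m f x + pderiv' m g x := by
  unfold pderiv'
  rw [fderiv_fun_add hf hg]
  simp

lemma lap'_sum {ι : Type*} {s : Finset ι} {F : ι → (Fin d → ℝ) → ℝ}
    (hf : ∀ i ∈ s, ContDiff ℝ (⊤:ℕ∞) (F i)) (x : Fin d → ℝ) :
    lap' (fun y => ∑ i ∈ s, F i y) x = ∑ i ∈ s, lap' (F i) x := by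
  unfold _root_.lap'
  rw [Finset.sum_comm]
  refine Finset.sum_congr rfl fun a _ => ?_
  have h1 : pderiv' a (fun y => ∑ i ∈ s, F i y) = fun y => ∑ i ∈ s, pderiv' a (F i) y := by
    funext y
    exact pderiv'_sum (fun i hi => ((hf i hi).differentiable (by simp)) y) a
  rw [h1]
  exact pderiv'_sum (fun i hi => (((hf i hi).pderiv' a).differentiable (by simp)) x) a

lemma pderiv'_lap'_comm {f : (Fin d → ℝ) → ℝ} (hf : ContDiff ℝ (⊤:ℕ∞) f) (i : Fin d)
    (x : Fin d → ℝ) : pderiv' i (lap' f) x = lap' (pderiv' i f) x := by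
  have h0 : (lap' f : (Fin d → ℝ) → ℝ) = fun y => ∑ a, pderiv' a (pderiv' a f) y := rfl
  rw [h0, pderiv'_sum (fun a _ => (((hf.pderiv' a).pderiv' a).differentiable (by simp)) x) i]
  unfold _root_.lap'
  refine Finset.sum_congr rfl fun a _ => ?_
  have h1 : pderiv' i (pderiv' a (pderiv' a f)) x = pderiv' a (pderiv' i (pderiv' a f)) x :=
    pderiv'_comm (hf.pderiv' a) i a x
  have h2 : pderiv' i (pderiv' a f) = pderiv' a (pderiv' i f) := by
    funext y; exact pderiv'_comm hf i a y
  rw [h1, h2]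

lemma lap'_mul {f g : (Fin d → ℝ) → ℝ} (hf : ContDiff ℝ (⊤:ℕ∞) f) (hg : ContDiff ℝ (⊤:ℕ∞) g)
    (x : Fin d → ℝ) :
    lap' (fun y => f y * g y) x
      = lap' f x * g x + 2 * ∑ a, pderiv' a f x * pderiv' a g x + f x * lap' g x := by
  unfold _root_.lap'
  have h1 : ∀ a : Fin d, pderiv' a (fun y => f y * g y)
      = fun y => pderiv' a f y * g y + f y * pderiv' a g y := fun a => funext fun y =>
    pderiv'_mul (hf.differentiable (by simp) y) (hg.differentiable (by simp) y) a
  have h2 : ∀ a : Fin d, pderiv' a (pderiv' a (fun y => f y * g y)) x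
      = pderiv' a (pderiv' a f) x * g x + 2 * (pderiv' a f x * pderiv' a g x)
        + f x * pderiv' a (pderiv' a g) x := by
    intro a
    rw [h1 a, pderiv'_add (((hf.pderiv' a).mul hg).differentiable (by simp) x)
        ((hf.mul (hg.pderiv' a)).differentiable (by simp) x) a,
      pderiv'_mul ((hf.pderiv' a).differentiable (by simp) x) (hg.differentiable (by simp) x) a,
      pderiv'_mul (hf.differentiable (by simp) x) ((hg.pderiv' a).differentiable (by simp) x) a]
    ring
  simp only [h2]
  rw [Finset.sum_add_distrib, Finset.sum_add_distrib, ← Finset.sum_mul, ← Finset.mul_sum,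
    ← Finset.mul_sum]

lemma pderiv'_const (c : ℝ) (m : Fin d) (x : Fin d → ℝ) :
    pderiv' m (fun _ : Fin d → ℝ => c) x = 0 := by
  unfold pderiv'
  rw [fderiv_fun_const]
  simp

lemma lap'_zero_fun (x : Fin d → ℝ) : lap' (fun _ : Fin d → ℝ => (0:ℝ)) x = 0 := by
  unfold _root_.lap'
  refine Finset.sum_eq_zero fun m _ => ?_
  rw [show pderiv' m (fun _ : Fin d → ℝ => (0:ℝ)) = (fun _ : Fin d → ℝ => (0:ℝ))
    from funext fun y => pderiv'_const 0 m y]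
  exact pderiv'_const 0 m x

lemma sum_rot3 {α β γ : Type*} [Fintype α] [Fintype β] [Fintype γ] (f : α → β → γ → ℝ) :
    ∑ a, ∑ b, ∑ c, f a b c = ∑ b, ∑ c, ∑ a, f a b c := by
  rw [Finset.sum_comm]
  exact Finset.sum_congr rfl fun b _ => Finset.sum_comm

lemma sum_rot4 {α β γ δ : Type*} [Fintype α] [Fintype β] [Fintype γ] [Fintype δ]
    (f : α → β → γ → δ → ℝ) :
    ∑ a, ∑ b, ∑ c, ∑ e, f a b c e = ∑ b, ∑ c, ∑ e, ∑ a, f a b c e := by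
  rw [Finset.sum_comm]
  exact Finset.sum_congr rfl fun b _ => sum_rot3 _

section core

variable {n : ℕ} {Λ : ℝ}
  {v : Fin (n+1) → (Fin (n+1) → ℝ) → ℝ}
  {q : Fin (n+1) → Fin (n+1) → (Fin (n+1) → ℝ) → ℝ}

lemma core_J4 (hΛ : 0 ≤ Λ)
    (hv : ∀ i, ContDiff ℝ (⊤:ℕ∞) (v i)) (hvp : ∀ i, IsCubePeriodic Λ (v i))
    (hdiv : ∀ x, ∑ i, pderiv' i (v i) x = 0)
    (hq : ∀ m k, ContDiff ℝ (⊤:ℕ∞) (q m k)) (hqp : ∀ m k, IsCubePeriodic Λ (q m k)) :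
    ∫ x in cube (n+1) Λ,
      ∑ m, ∑ k, ∑ i, lap' (q m k) x * (v i x * pderiv' i (lap' (q m k)) x) = 0 := by
  set Φ : (Fin (n+1) → ℝ) → ℝ := fun y => ∑ m, ∑ k, lap' (q m k) y * lap' (q m k) y with hΦdef
  have hΦs : ContDiff ℝ (⊤:ℕ∞) Φ :=
    ContDiff.sum fun m _ => ContDiff.sum fun k _ => ((hq m k).lap').mul ((hq m k).lap')
  have hΦp : IsCubePeriodic Λ Φ :=
    IsCubePeriodic.sum fun m _ => IsCubePeriodic.sum fun k _ =>
      (((hqp m k).lap' (hq m k))).mul (((hqp m k).lap' (hq m k)))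
  have hDΦ : ∀ (i : Fin (n+1)) x, pderiv' i Φ x
      = ∑ m, ∑ k, 2 * (lap' (q m k) x * pderiv' i (lap' (q m k)) x) := by
    intro i x
    rw [hΦdef, pderiv'_sum (fun m _ => (ContDiff.sum fun k _ =>
      ((hq m k).lap').mul ((hq m k).lap')).differentiable (by simp) x) i]
    refine Finset.sum_congr rfl fun m _ => ?_
    rw [pderiv'_sum (fun k _ =>
      (((hq m k).lap').mul ((hq m k).lap')).differentiable (by simp) x) i]
    refine Finset.sum_congr rfl fun k _ => ?_
    rw [pderiv'_mul (((hq m k).lap').differentiable (by simp) x)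
      (((hq m k).lap').differentiable (by simp) x) i]
    ring
  have key : ∫ x in cube (n+1) Λ, ∑ i, v i x * pderiv' i Φ x = 0 :=
    integral_advection_eq_zero hΛ hv hvp hdiv hΦs hΦp
  have hpt : ∀ x, ∑ i, v i x * pderiv' i Φ x
      = 2 * ∑ m, ∑ k, ∑ i, lap' (q m k) x * (v i x * pderiv' i (lap' (q m k)) x) := by
    intro x
    calc ∑ i, v i x * pderiv' i Φ x
        = ∑ i, ∑ m, ∑ k, v i x * (2 * (lap' (q m k) x * pderiv' i (lap' (q m k)) x)) := by
          refine Finset.sum_congr rfl fun i _ => ?_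
          rw [hDΦ i x, Finset.mul_sum]
          exact Finset.sum_congr rfl fun m _ => by rw [Finset.mul_sum]
      _ = ∑ m, ∑ k, ∑ i, v i x * (2 * (lap' (q m k) x * pderiv' i (lap' (q m k)) x)) :=
          sum_rot3 _
      _ = 2 * ∑ m, ∑ k, ∑ i, lap' (q m k) x * (v i x * pderiv' i (lap' (q m k)) x) := by
          rw [Finset.mul_sum]
          refine Finset.sum_congr rfl fun m _ => ?_
          rw [Finset.mul_sum]
          refine Finset.sum_congr rfl fun k _ => ?_
          rw [Finset.mul_sum]
          exact Finset.sum_congr rfl fun i _ => by ring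
  simp only [hpt] at key
  rw [MeasureTheory.integral_const_mul] at key
  linarith

lemma div_lap_zero
    (hv : ∀ i, ContDiff ℝ (⊤:ℕ∞) (v i))
    (hdiv : ∀ x, ∑ i, pderiv' i (v i) x = 0) :
    ∀ x, ∑ i, pderiv' i (lap' (v i)) x = 0 := by
  intro x
  have h1 : ∀ i : Fin (n+1), pderiv' i (lap' (v i)) x = lap' (pderiv' i (v i)) x := fun i =>
    pderiv'_lap'_comm (hv i) i x
  simp only [h1]
  rw [← lap'_sum (fun i _ => (hv i).pderiv' i) x,
    show (fun y => ∑ i, pderiv' i (v i) y) = (fun _ : Fin (n+1) → ℝ => (0:ℝ)) from funext hdiv]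
  exact lap'_zero_fun x

lemma core_J1 (hΛ : 0 ≤ Λ)
    (hv : ∀ i, ContDiff ℝ (⊤:ℕ∞) (v i)) (hvp : ∀ i, IsCubePeriodic Λ (v i))
    (hdiv : ∀ x, ∑ i, pderiv' i (v i) x = 0)
    (hq : ∀ m k, ContDiff ℝ (⊤:ℕ∞) (q m k)) (hqp : ∀ m k, IsCubePeriodic Λ (q m k)) :
    ∫ x in cube (n+1) Λ, ∑ i, ∑ j, ∑ m, ∑ k,
      lap' (v i) x * (pderiv' j (pderiv' i (q m k)) x * pderiv' j (q m k) x) = 0 := by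
  set Ψ : (Fin (n+1) → ℝ) → ℝ :=
    fun y => ∑ j, ∑ m, ∑ k, pderiv' j (q m k) y * pderiv' j (q m k) y with hΨdef
  have hΨs : ContDiff ℝ (⊤:ℕ∞) Ψ :=
    ContDiff.sum fun j _ => ContDiff.sum fun m _ => ContDiff.sum fun k _ =>
      ((hq m k).pderiv' j).mul ((hq m k).pderiv' j)
  have hΨp : IsCubePeriodic Λ Ψ :=
    IsCubePeriodic.sum fun j _ => IsCubePeriodic.sum fun m _ => IsCubePeriodic.sum fun k _ =>
      ((hqp m k).pderiv' (hq m k) j).mul ((hqp m k).pderiv' (hq m k) j)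
  have hDΨ : ∀ (i : Fin (n+1)) x, pderiv' i Ψ x
      = ∑ j, ∑ m, ∑ k, 2 * (pderiv' j (pderiv' i (q m k)) x * pderiv' j (q m k) x) := by
    intro i x
    rw [hΨdef, pderiv'_sum (fun j _ => (ContDiff.sum fun m _ => ContDiff.sum fun k _ =>
      ((hq m k).pderiv' j).mul ((hq m k).pderiv' j)).differentiable (by simp) x) i]
    refine Finset.sum_congr rfl fun j _ => ?_
    rw [pderiv'_sum (fun m _ => (ContDiff.sum fun k _ =>
      ((hq m k).pderiv' j).mul ((hq m k).pderiv' j)).differentiable (by simp) x) i]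
    refine Finset.sum_congr rfl fun m _ => ?_
    rw [pderiv'_sum (fun k _ =>
      (((hq m k).pderiv' j).mul ((hq m k).pderiv' j)).differentiable (by simp) x) i]
    refine Finset.sum_congr rfl fun k _ => ?_
    rw [pderiv'_mul (((hq m k).pderiv' j).differentiable (by simp) x)
      (((hq m k).pderiv' j).differentiable (by simp) x) i,
      pderiv'_comm (hq m k) i j x]
    ring
  have hIntΨ : ∀ i : Fin (n+1), ∫ x in cube (n+1) Λ, lap' (v i) x * pderiv' i Ψ x
      = - ∫ x in cube (n+1) Λ, pderiv' i (lap' (v i)) x * Ψ x := by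
    intro i
    have := integral_pderiv'_mul hΛ ((hv i).lap') hΨs ((hvp i).lap' (hv i)) hΨp i
    linarith
  have key : ∫ x in cube (n+1) Λ, ∑ i, lap' (v i) x * pderiv' i Ψ x = 0 := by
    rw [MeasureTheory.integral_finset_sum _ (fun i _ => cont_integrableOn_cube
      (((hv i).lap').continuous.fun_mul ((hΨs.pderiv' i).continuous)))]
    simp only [hIntΨ]
    rw [Finset.sum_neg_distrib, neg_eq_zero,
      ← MeasureTheory.integral_finset_sum _ (fun i _ => cont_integrableOn_cube
        ((((hv i).lap').pderiv' i).continuous.fun_mul (hΨs.continuous)))]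
    have hz : ∀ x : Fin (n+1) → ℝ, ∑ i, pderiv' i (lap' (v i)) x * Ψ x = 0 := by
      intro x
      rw [← Finset.sum_mul, div_lap_zero hv hdiv x, zero_mul]
    simp only [hz, MeasureTheory.integral_zero]
  have hpt : ∀ x, ∑ i, lap' (v i) x * pderiv' i Ψ x
      = 2 * ∑ i, ∑ j, ∑ m, ∑ k,
        lap' (v i) x * (pderiv' j (pderiv' i (q m k)) x * pderiv' j (q m k) x) := by
    intro x
    rw [Finset.mul_sum]
    refine Finset.sum_congr rfl fun i _ => ?_
    rw [hDΨ i x, Finset.mul_sum, Finset.mul_sum]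
    refine Finset.sum_congr rfl fun j _ => ?_
    rw [Finset.mul_sum, Finset.mul_sum]
    refine Finset.sum_congr rfl fun m _ => ?_
    rw [Finset.mul_sum, Finset.mul_sum]
    exact Finset.sum_congr rfl fun k _ => by ring
  simp only [hpt] at key
  rw [MeasureTheory.integral_const_mul] at key
  linarith

lemma core_J2 :
    (∫ x in cube (n+1) Λ, ∑ i, ∑ m, ∑ k,
      lap' (v i) x * (pderiv' i (q m k) x * lap' (q m k) x))
    = ∫ x in cube (n+1) Λ, ∑ m, ∑ k, ∑ i,
      lap' (q m k) x * (lap' (v i) x * pderiv' i (q m k) x) := by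
  have hpt : ∀ x : Fin (n+1) → ℝ, (∑ i, ∑ m, ∑ k : Fin (n+1),
      lap' (v i) x * (pderiv' i (q m k) x * lap' (q m k) x))
      = ∑ m, ∑ k, ∑ i : Fin (n+1),
        lap' (q m k) x * (lap' (v i) x * pderiv' i (q m k) x) := by
    intro x
    rw [sum_rot3]
    refine Finset.sum_congr rfl fun m _ => Finset.sum_congr rfl fun k _ =>
      Finset.sum_congr rfl fun i _ => by ring
  simp only [hpt]

lemma core_A (hv : ∀ i, ContDiff ℝ (⊤:ℕ∞) (v i))
    (hq : ∀ m k, ContDiff ℝ (⊤:ℕ∞) (q m k)) :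
    (∫ x in cube (n+1) Λ, ∑ i, ∑ j, lap' (v i) x *
        pderiv' j (fun y => ∑ m, ∑ k, pderiv' i (q m k) y * pderiv' j (q m k) y) x)
    = (∫ x in cube (n+1) Λ, ∑ i, ∑ j, ∑ m, ∑ k,
        lap' (v i) x * (pderiv' j (pderiv' i (q m k)) x * pderiv' j (q m k) x))
      + ∫ x in cube (n+1) Λ, ∑ i, ∑ m, ∑ k,
        lap' (v i) x * (pderiv' i (q m k) x * lap' (q m k) x) := by
  have hin : ∀ (i j : Fin (n+1)) x, pderiv' j
      (fun y => ∑ m, ∑ k, pderiv' i (q m k) y * pderiv' j (q m k) y) x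
      = ∑ m, ∑ k, (pderiv' j (pderiv' i (q m k)) x * pderiv' j (q m k) x
        + pderiv' i (q m k) x * pderiv' j (pderiv' j (q m k)) x) := by
    intro i j x
    rw [pderiv'_sum (fun m _ => (ContDiff.sum fun k _ =>
      ((hq m k).pderiv' i).mul ((hq m k).pderiv' j)).differentiable (by simp) x) j]
    refine Finset.sum_congr rfl fun m _ => ?_
    rw [pderiv'_sum (fun k _ =>
      (((hq m k).pderiv' i).mul ((hq m k).pderiv' j)).differentiable (by simp) x) j]
    refine Finset.sum_congr rfl fun k _ => ?_
    exact pderiv'_mul (((hq m k).pderiv' i).differentiable (by simp) x)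
      (((hq m k).pderiv' j).differentiable (by simp) x) j
  have hpt : ∀ x : Fin (n+1) → ℝ, (∑ i, ∑ j, lap' (v i) x *
      pderiv' j (fun y => ∑ m, ∑ k, pderiv' i (q m k) y * pderiv' j (q m k) y) x)
      = (∑ i, ∑ j, ∑ m, ∑ k,
          lap' (v i) x * (pderiv' j (pderiv' i (q m k)) x * pderiv' j (q m k) x))
        + ∑ i, ∑ m, ∑ k, lap' (v i) x * (pderiv' i (q m k) x * lap' (q m k) x) := by
    intro x
    have step1 : ∀ i : Fin (n+1), (∑ j, lap' (v i) x *
        pderiv' j (fun y => ∑ m, ∑ k, pderiv' i (q m k) y * pderiv' j (q m k) y) x)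
        = (∑ j, ∑ m, ∑ k,
            lap' (v i) x * (pderiv' j (pderiv' i (q m k)) x * pderiv' j (q m k) x))
          + ∑ m, ∑ k, lap' (v i) x * (pderiv' i (q m k) x * lap' (q m k) x) := by
      intro i
      have e1 : ∀ j : Fin (n+1), lap' (v i) x *
          pderiv' j (fun y => ∑ m, ∑ k, pderiv' i (q m k) y * pderiv' j (q m k) y) x
          = (∑ m, ∑ k, lap' (v i) x *
              (pderiv' j (pderiv' i (q m k)) x * pderiv' j (q m k) x))
            + ∑ m, ∑ k, lap' (v i) x *
              (pderiv' i (q m k) x * pderiv' j (pderiv' j (q m k)) x) := by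
        intro j
        rw [hin i j x, Finset.mul_sum]
        rw [← Finset.sum_add_distrib]
        refine Finset.sum_congr rfl fun m _ => ?_
        rw [Finset.mul_sum, ← Finset.sum_add_distrib]
        refine Finset.sum_congr rfl fun k _ => by ring
      rw [Finset.sum_congr rfl fun j _ => e1 j, Finset.sum_add_distrib]
      congr 1
      rw [sum_rot3]
      refine Finset.sum_congr rfl fun m _ => Finset.sum_congr rfl fun k _ => ?_
      rw [← Finset.mul_sum, ← Finset.mul_sum]
      rfl
    rw [Finset.sum_congr rfl fun i _ => step1 i, Finset.sum_add_distrib]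
  simp only [hpt]
  refine MeasureTheory.integral_add ?_ ?_
  · exact cont_integrableOn_cube (continuous_finset_sum _ fun i _ =>
      continuous_finset_sum _ fun j _ => continuous_finset_sum _ fun m _ =>
      continuous_finset_sum _ fun k _ => ((hv i).lap').continuous.mul
        (((((hq m k).pderiv' i).pderiv' j)).continuous.mul (((hq m k).pderiv' j).continuous)))
  · exact cont_integrableOn_cube (continuous_finset_sum _ fun i _ =>
      continuous_finset_sum _ fun m _ => continuous_finset_sum _ fun k _ =>
      ((hv i).lap').continuous.mul
        ((((hq m k).pderiv' i)).continuous.mul (((hq m k).lap').continuous)))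

lemma mul_sum2 {α β : Type*} [Fintype α] [Fintype β] (X : α → β → ℝ) (c : ℝ) :
    (∑ a, ∑ b, c * X a b) = c * ∑ a, ∑ b, X a b := by
  rw [Finset.mul_sum]
  exact Finset.sum_congr rfl fun a _ => (Finset.mul_sum _ _ _).symm

lemma core_B (hv : ∀ i, ContDiff ℝ (⊤:ℕ∞) (v i))
    (hq : ∀ m k, ContDiff ℝ (⊤:ℕ∞) (q m k)) :
    (∫ x in cube (n+1) Λ, ∑ m, ∑ k, lap' (q m k) x *
        lap' (fun y => ∑ i, v i y * pderiv' i (q m k) y) x)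
    = (∫ x in cube (n+1) Λ, ∑ m, ∑ k, ∑ i,
        lap' (q m k) x * (lap' (v i) x * pderiv' i (q m k) x))
      + (2 * ∫ x in cube (n+1) Λ, ∑ m, ∑ k, ∑ i, ∑ a,
          lap' (q m k) x * (pderiv' a (v i) x * pderiv' a (pderiv' i (q m k)) x))
      + ∫ x in cube (n+1) Λ, ∑ m, ∑ k, ∑ i,
          lap' (q m k) x * (v i x * pderiv' i (lap' (q m k)) x) := by
  have hin : ∀ (m k : Fin (n+1)) x, lap' (fun y => ∑ i, v i y * pderiv' i (q m k) y) x
      = ∑ i, (lap' (v i) x * pderiv' i (q m k) x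
          + 2 * ∑ a, pderiv' a (v i) x * pderiv' a (pderiv' i (q m k)) x
          + v i x * pderiv' i (lap' (q m k)) x) := by
    intro m k x
    rw [lap'_sum (fun i _ => (hv i).mul ((hq m k).pderiv' i)) x]
    refine Finset.sum_congr rfl fun i _ => ?_
    rw [lap'_mul (hv i) ((hq m k).pderiv' i) x, ← pderiv'_lap'_comm (hq m k) i x]
  have hpt : ∀ x : Fin (n+1) → ℝ, (∑ m, ∑ k, lap' (q m k) x *
      lap' (fun y => ∑ i, v i y * pderiv' i (q m k) y) x)
      = (∑ m, ∑ k, ∑ i, lap' (q m k) x * (lap' (v i) x * pderiv' i (q m k) x))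
        + ((2 * ∑ m, ∑ k, ∑ i, ∑ a,
            lap' (q m k) x * (pderiv' a (v i) x * pderiv' a (pderiv' i (q m k)) x))
          + ∑ m, ∑ k, ∑ i, lap' (q m k) x * (v i x * pderiv' i (lap' (q m k)) x)) := by
    intro x
    have step : ∀ m k : Fin (n+1), lap' (q m k) x *
        lap' (fun y => ∑ i, v i y * pderiv' i (q m k) y) x
        = (∑ i, lap' (q m k) x * (lap' (v i) x * pderiv' i (q m k) x))
          + ((2 * ∑ i, ∑ a,
              lap' (q m k) x * (pderiv' a (v i) x * pderiv' a (pderiv' i (q m k)) x))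
            + ∑ i, lap' (q m k) x * (v i x * pderiv' i (lap' (q m k)) x)) := by
      intro m k
      rw [hin m k x, Finset.mul_sum]
      have e1 : ∀ i : Fin (n+1), lap' (q m k) x * (lap' (v i) x * pderiv' i (q m k) x
          + 2 * ∑ a, pderiv' a (v i) x * pderiv' a (pderiv' i (q m k)) x
          + v i x * pderiv' i (lap' (q m k)) x)
          = lap' (q m k) x * (lap' (v i) x * pderiv' i (q m k) x)
            + ((2 * ∑ a,
                lap' (q m k) x * (pderiv' a (v i) x * pderiv' a (pderiv' i (q m k)) x))
              + lap' (q m k) x * (v i x * pderiv' i (lap' (q m k)) x)) := by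
        intro i
        have hT : (∑ a, lap' (q m k) x *
            (pderiv' a (v i) x * pderiv' a (pderiv' i (q m k)) x))
            = lap' (q m k) x *
              ∑ a, pderiv' a (v i) x * pderiv' a (pderiv' i (q m k)) x :=
          (Finset.mul_sum _ _ _).symm
        rw [hT]
        ring
      rw [Finset.sum_congr rfl fun i _ => e1 i, Finset.sum_add_distrib,
        Finset.sum_add_distrib]
      congr 1
      congr 1
      exact (Finset.mul_sum _ _ _).symm
    rw [Finset.sum_congr rfl fun m _ => Finset.sum_congr rfl fun k _ => step m k]
    have split : ∀ m : Fin (n+1), (∑ k, ((∑ i, lap' (q m k) x *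
        (lap' (v i) x * pderiv' i (q m k) x))
        + ((2 * ∑ i, ∑ a,
            lap' (q m k) x * (pderiv' a (v i) x * pderiv' a (pderiv' i (q m k)) x))
          + ∑ i, lap' (q m k) x * (v i x * pderiv' i (lap' (q m k)) x))))
        = (∑ k, ∑ i, lap' (q m k) x * (lap' (v i) x * pderiv' i (q m k) x))
          + ((∑ k, 2 * ∑ i, ∑ a,
              lap' (q m k) x * (pderiv' a (v i) x * pderiv' a (pderiv' i (q m k)) x))
            + ∑ k, ∑ i, lap' (q m k) x * (v i x * pderiv' i (lap' (q m k)) x)) := by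
      intro m
      rw [Finset.sum_add_distrib, Finset.sum_add_distrib]
    rw [Finset.sum_congr rfl fun m _ => split m, Finset.sum_add_distrib,
      Finset.sum_add_distrib]
    congr 1
    congr 1
    exact mul_sum2 _ _
  simp only [hpt]
  have contJ2' : Continuous (fun x : Fin (n+1) → ℝ => ∑ m, ∑ k, ∑ i,
      lap' (q m k) x * (lap' (v i) x * pderiv' i (q m k) x)) :=
    continuous_finset_sum _ fun m _ => continuous_finset_sum _ fun k _ =>
      continuous_finset_sum _ fun i _ => ((hq m k).lap').continuous.mul
        (((hv i).lap').continuous.mul (((hq m k).pderiv' i).continuous))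
  have contJ3 : Continuous (fun x : Fin (n+1) → ℝ => ∑ m, ∑ k, ∑ i, ∑ a,
      lap' (q m k) x * (pderiv' a (v i) x * pderiv' a (pderiv' i (q m k)) x)) :=
    continuous_finset_sum _ fun m _ => continuous_finset_sum _ fun k _ =>
      continuous_finset_sum _ fun i _ => continuous_finset_sum _ fun a _ =>
        ((hq m k).lap').continuous.mul (((hv i).pderiv' a).continuous.mul
          ((((hq m k).pderiv' i).pderiv' a)).continuous)
  have contJ4 : Continuous (fun x : Fin (n+1) → ℝ => ∑ m, ∑ k, ∑ i,
      lap' (q m k) x * (v i x * pderiv' i (lap' (q m k)) x)) :=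
    continuous_finset_sum _ fun m _ => continuous_finset_sum _ fun k _ =>
      continuous_finset_sum _ fun i _ => ((hq m k).lap').continuous.mul
        ((hv i).continuous.mul ((((hq m k).lap').pderiv' i).continuous))
  rw [MeasureTheory.integral_add (cont_integrableOn_cube contJ2')
      (cont_integrableOn_cube ((continuous_const.fun_mul contJ3).fun_add contJ4)),
    MeasureTheory.integral_add (cont_integrableOn_cube (continuous_const.fun_mul contJ3))
      (cont_integrableOn_cube contJ4),
    MeasureTheory.integral_const_mul]
  ring

lemma core_C (hΛ : 0 ≤ Λ)
    (hv : ∀ i, ContDiff ℝ (⊤:ℕ∞) (v i)) (hvp : ∀ i, IsCubePeriodic Λ (v i))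
    (hq : ∀ m k, ContDiff ℝ (⊤:ℕ∞) (q m k)) (hqp : ∀ m k, IsCubePeriodic Λ (q m k)) :
    (∫ x in cube (n+1) Λ, ∑ j, ∑ m, ∑ k, pderiv' j (lap' (q m k)) x *
        (∑ i, v i x * pderiv' i (pderiv' j (q m k)) x))
    = - (∫ x in cube (n+1) Λ, ∑ m, ∑ k, ∑ i, ∑ a,
          lap' (q m k) x * (pderiv' a (v i) x * pderiv' a (pderiv' i (q m k)) x))
      - ∫ x in cube (n+1) Λ, ∑ m, ∑ k, ∑ i,
          lap' (q m k) x * (v i x * pderiv' i (lap' (q m k)) x) := by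
  have hg : ∀ (j m k : Fin (n+1)), ContDiff ℝ (⊤:ℕ∞)
      (fun y => ∑ i, v i y * pderiv' i (pderiv' j (q m k)) y) := fun j m k =>
    ContDiff.sum fun i _ => (hv i).mul (((hq m k).pderiv' j).pderiv' i)
  have hgp : ∀ (j m k : Fin (n+1)), IsCubePeriodic Λ
      (fun y => ∑ i, v i y * pderiv' i (pderiv' j (q m k)) y) := fun j m k =>
    IsCubePeriodic.sum fun i _ => (hvp i).mul
      ((((hqp m k).pderiv' (hq m k) j)).pderiv' ((hq m k).pderiv' j) i)
  have contg : ∀ (j m k : Fin (n+1)), Continuous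
      (fun x : Fin (n+1) → ℝ => ∑ i, v i x * pderiv' i (pderiv' j (q m k)) x) := fun j m k =>
    (hg j m k).continuous
  have cont1 : ∀ (j m k : Fin (n+1)), Continuous (fun x : Fin (n+1) → ℝ =>
      pderiv' j (lap' (q m k)) x * ∑ i, v i x * pderiv' i (pderiv' j (q m k)) x) := fun j m k =>
    ((((hq m k).lap').pderiv' j).continuous).mul (contg j m k)
  have cont2 : ∀ (j m k : Fin (n+1)), Continuous (fun x : Fin (n+1) → ℝ =>
      ∑ i, lap' (q m k) x * (pderiv' j (v i) x * pderiv' i (pderiv' j (q m k)) x)) :=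
    fun j m k => continuous_finset_sum _ fun i _ => (((hq m k).lap').continuous).mul
      ((((hv i).pderiv' j).continuous).mul ((((hq m k).pderiv' j).pderiv' i).continuous))
  have cont3 : ∀ (j m k : Fin (n+1)), Continuous (fun x : Fin (n+1) → ℝ =>
      ∑ i, lap' (q m k) x * (v i x *
        pderiv' i (pderiv' j (pderiv' j (q m k))) x)) :=
    fun j m k => continuous_finset_sum _ fun i _ => (((hq m k).lap').continuous).mul
      (((hv i).continuous).mul (((((hq m k).pderiv' j).pderiv' j).pderiv' i).continuous))
  have hIBP : ∀ (j m k : Fin (n+1)),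
      (∫ x in cube (n+1) Λ, pderiv' j (lap' (q m k)) x *
        (∑ i, v i x * pderiv' i (pderiv' j (q m k)) x))
      = - ∫ x in cube (n+1) Λ, lap' (q m k) x *
          pderiv' j (fun y => ∑ i, v i y * pderiv' i (pderiv' j (q m k)) y) x := fun j m k =>
    integral_pderiv'_mul hΛ ((hq m k).lap') (hg j m k) ((hqp m k).lap' (hq m k)) (hgp j m k) j
  have hDg : ∀ (j m k : Fin (n+1)) x,
      lap' (q m k) x * pderiv' j (fun y => ∑ i, v i y * pderiv' i (pderiv' j (q m k)) y) x
      = (∑ i, lap' (q m k) x * (pderiv' j (v i) x * pderiv' i (pderiv' j (q m k)) x))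
        + ∑ i, lap' (q m k) x * (v i x * pderiv' i (pderiv' j (pderiv' j (q m k))) x) := by
    intro j m k x
    rw [pderiv'_sum (fun i _ =>
      ((hv i).mul (((hq m k).pderiv' j).pderiv' i)).differentiable (by simp) x) j]
    have e1 : ∀ i : Fin (n+1), pderiv' j (fun y => v i y * pderiv' i (pderiv' j (q m k)) y) x
        = pderiv' j (v i) x * pderiv' i (pderiv' j (q m k)) x
          + v i x * pderiv' i (pderiv' j (pderiv' j (q m k))) x := by
      intro i
      rw [pderiv'_mul ((hv i).differentiable (by simp) x)
        ((((hq m k).pderiv' j).pderiv' i).differentiable (by simp) x) j,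
        pderiv'_comm ((hq m k).pderiv' j) j i x]
    rw [Finset.sum_congr rfl fun i _ => e1 i, Finset.mul_sum, ← Finset.sum_add_distrib]
    exact Finset.sum_congr rfl fun i _ => by ring
  calc (∫ x in cube (n+1) Λ, ∑ j, ∑ m, ∑ k, pderiv' j (lap' (q m k)) x *
        (∑ i, v i x * pderiv' i (pderiv' j (q m k)) x))
      = ∑ j, ∑ m, ∑ k, ∫ x in cube (n+1) Λ, pderiv' j (lap' (q m k)) x *
          (∑ i, v i x * pderiv' i (pderiv' j (q m k)) x) := by
        rw [MeasureTheory.integral_finset_sum _ (fun j _ => cont_integrableOn_cube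
          (continuous_finset_sum _ fun m _ => continuous_finset_sum _ fun k _ => cont1 j m k))]
        refine Finset.sum_congr rfl fun j _ => ?_
        rw [MeasureTheory.integral_finset_sum _ (fun m _ => cont_integrableOn_cube
          (continuous_finset_sum _ fun k _ => cont1 j m k))]
        exact Finset.sum_congr rfl fun m _ =>
          MeasureTheory.integral_finset_sum _ (fun k _ => cont_integrableOn_cube (cont1 j m k))
    _ = ∑ j, ∑ m, ∑ k, - ((∫ x in cube (n+1) Λ, ∑ i, lap' (q m k) x *
            (pderiv' j (v i) x * pderiv' i (pderiv' j (q m k)) x))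
          + ∫ x in cube (n+1) Λ, ∑ i, lap' (q m k) x *
            (v i x * pderiv' i (pderiv' j (pderiv' j (q m k))) x)) := by
        refine Finset.sum_congr rfl fun j _ => Finset.sum_congr rfl fun m _ =>
          Finset.sum_congr rfl fun k _ => ?_
        rw [hIBP j m k]
        congr 1
        rw [show (fun x : Fin (n+1) → ℝ => lap' (q m k) x *
            pderiv' j (fun y => ∑ i, v i y * pderiv' i (pderiv' j (q m k)) y) x)
          = fun x => (∑ i, lap' (q m k) x *
              (pderiv' j (v i) x * pderiv' i (pderiv' j (q m k)) x))
            + ∑ i, lap' (q m k) x *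
              (v i x * pderiv' i (pderiv' j (pderiv' j (q m k))) x)
          from funext fun x => hDg j m k x]
        exact MeasureTheory.integral_add (cont_integrableOn_cube (cont2 j m k))
          (cont_integrableOn_cube (cont3 j m k))
    _ = - ((∑ j, ∑ m, ∑ k, ∫ x in cube (n+1) Λ, ∑ i, lap' (q m k) x *
            (pderiv' j (v i) x * pderiv' i (pderiv' j (q m k)) x))
          + ∑ j, ∑ m, ∑ k, ∫ x in cube (n+1) Λ, ∑ i, lap' (q m k) x *
            (v i x * pderiv' i (pderiv' j (pderiv' j (q m k))) x)) := by
        simp only [Finset.sum_neg_distrib, Finset.sum_add_distrib]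
    _ = - (∫ x in cube (n+1) Λ, ∑ m, ∑ k, ∑ i, ∑ a,
            lap' (q m k) x * (pderiv' a (v i) x * pderiv' a (pderiv' i (q m k)) x))
        - ∫ x in cube (n+1) Λ, ∑ m, ∑ k, ∑ i,
            lap' (q m k) x * (v i x * pderiv' i (lap' (q m k)) x) := by
        have exch1 : (∫ x in cube (n+1) Λ, ∑ j, ∑ m, ∑ k, ∑ i,
              lap' (q m k) x * (pderiv' j (v i) x * pderiv' i (pderiv' j (q m k)) x))
            = ∑ j, ∑ m, ∑ k, ∫ x in cube (n+1) Λ, ∑ i,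
              lap' (q m k) x * (pderiv' j (v i) x * pderiv' i (pderiv' j (q m k)) x) := by
          rw [MeasureTheory.integral_finset_sum _ (fun j _ => cont_integrableOn_cube
            (continuous_finset_sum _ fun m _ => continuous_finset_sum _ fun k _ => cont2 j m k))]
          refine Finset.sum_congr rfl fun j _ => ?_
          rw [MeasureTheory.integral_finset_sum _ (fun m _ => cont_integrableOn_cube
            (continuous_finset_sum _ fun k _ => cont2 j m k))]
          exact Finset.sum_congr rfl fun m _ =>
            MeasureTheory.integral_finset_sum _ (fun k _ => cont_integrableOn_cube (cont2 j m k))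
        have exch2 : (∫ x in cube (n+1) Λ, ∑ j, ∑ m, ∑ k, ∑ i,
              lap' (q m k) x * (v i x * pderiv' i (pderiv' j (pderiv' j (q m k))) x))
            = ∑ j, ∑ m, ∑ k, ∫ x in cube (n+1) Λ, ∑ i,
              lap' (q m k) x * (v i x * pderiv' i (pderiv' j (pderiv' j (q m k))) x) := by
          rw [MeasureTheory.integral_finset_sum _ (fun j _ => cont_integrableOn_cube
            (continuous_finset_sum _ fun m _ => continuous_finset_sum _ fun k _ => cont3 j m k))]
          refine Finset.sum_congr rfl fun j _ => ?_
          rw [MeasureTheory.integral_finset_sum _ (fun m _ => cont_integrableOn_cube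
            (continuous_finset_sum _ fun k _ => cont3 j m k))]
          exact Finset.sum_congr rfl fun m _ =>
            MeasureTheory.integral_finset_sum _ (fun k _ => cont_integrableOn_cube (cont3 j m k))
        have hpt1 : ∀ x : Fin (n+1) → ℝ, (∑ j, ∑ m, ∑ k, ∑ i : Fin (n+1),
              lap' (q m k) x * (pderiv' j (v i) x * pderiv' i (pderiv' j (q m k)) x))
            = ∑ m, ∑ k, ∑ i, ∑ a,
              lap' (q m k) x * (pderiv' a (v i) x * pderiv' a (pderiv' i (q m k)) x) := by
          intro x
          rw [sum_rot4]
          refine Finset.sum_congr rfl fun m _ => Finset.sum_congr rfl fun k _ =>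
            Finset.sum_congr rfl fun i _ => Finset.sum_congr rfl fun j _ => ?_
          rw [pderiv'_comm (hq m k) i j x]
        have hpt2 : ∀ x : Fin (n+1) → ℝ, (∑ j, ∑ m, ∑ k, ∑ i : Fin (n+1),
              lap' (q m k) x * (v i x * pderiv' i (pderiv' j (pderiv' j (q m k))) x))
            = ∑ m, ∑ k, ∑ i, lap' (q m k) x * (v i x * pderiv' i (lap' (q m k)) x) := by
          intro x
          rw [sum_rot4]
          refine Finset.sum_congr rfl fun m _ => Finset.sum_congr rfl fun k _ =>
            Finset.sum_congr rfl fun i _ => ?_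
          rw [← Finset.mul_sum, ← Finset.mul_sum]
          congr 2
          have h0 : (lap' (q m k) : (Fin (n+1) → ℝ) → ℝ)
              = fun y => ∑ j, pderiv' j (pderiv' j (q m k)) y := rfl
          rw [h0, pderiv'_sum (fun j _ =>
            ((((hq m k).pderiv' j).pderiv' j)).differentiable (by simp) x) i]
        rw [← exch1, ← exch2]
        simp only [hpt1, hpt2]
        ring

lemma core_main (hΛ : 0 ≤ Λ)
    (hv : ∀ i, ContDiff ℝ (⊤:ℕ∞) (v i)) (hvp : ∀ i, IsCubePeriodic Λ (v i))
    (hdiv : ∀ x, ∑ i, pderiv' i (v i) x = 0)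
    (hq : ∀ m k, ContDiff ℝ (⊤:ℕ∞) (q m k)) (hqp : ∀ m k, IsCubePeriodic Λ (q m k)) :
    (∫ x in cube (n+1) Λ, ∑ i, ∑ j, lap' (v i) x *
        pderiv' j (fun y => ∑ m, ∑ k, pderiv' i (q m k) y * pderiv' j (q m k) y) x)
      - (∫ x in cube (n+1) Λ, ∑ m, ∑ k, lap' (q m k) x *
          lap' (fun y => ∑ i, v i y * pderiv' i (q m k) y) x)
      = 2 * ∫ x in cube (n+1) Λ, ∑ j, ∑ m, ∑ k, pderiv' j (lap' (q m k)) x *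
          (∑ i, v i x * pderiv' i (pderiv' j (q m k)) x) := by
  rw [core_A hv hq, core_B hv hq, core_C hΛ hv hvp hq hqp,
    core_J1 hΛ hv hvp hdiv hq hqp, core_J4 hΛ hv hvp hdiv hq hqp, core_J2 (v := v) (q := q)]
  ring

end core

lemma lap'_entry {d : ℕ} {Q : (Fin d → ℝ) → Matrix (Fin d) (Fin d) ℝ}
    (hQ : ContDiff ℝ (⊤:ℕ∞) Q) (m k : Fin d) (x : Fin d → ℝ) :
    lap' Q x m k = lap' (fun y => Q y m k) x :=
  (lap'_clm_comp (entryCLM d m k) hQ x).symm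

lemma lap'_pi {d : ℕ} {u : (Fin d → ℝ) → (Fin d → ℝ)} (hu : ContDiff ℝ (⊤:ℕ∞) u)
    (i : Fin d) (x : Fin d → ℝ) :
    lap' u x i = lap' (fun y => u y i) x :=
  (lap'_clm_comp (ContinuousLinearMap.proj (R := ℝ) (φ := fun _ : Fin d => ℝ) i) hu x).symm

lemma pderiv'_pi {d : ℕ} {u : (Fin d → ℝ) → (Fin d → ℝ)} {x : Fin d → ℝ}
    (hu : DifferentiableAt ℝ u x) (i j : Fin d) :
    pderiv' i u x j = pderiv' i (fun y => u y j) x :=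
  (pderiv'_clm_comp (ContinuousLinearMap.proj (R := ℝ) (φ := fun _ : Fin d => ℝ) j) hu i).symm

lemma trace_transpose_mul' {d : ℕ} (A B : Matrix (Fin d) (Fin d) ℝ) :
    (Aᵀ * B).trace = ∑ m, ∑ k, A m k * B m k := by
  rw [Matrix.trace]
  simp only [Matrix.diag, Matrix.mul_apply, Matrix.transpose_apply]
  exact Finset.sum_comm

/-- For `u` smooth, `I^d`-periodic and divergence-free and `Q` smooth,
`I^d`-periodic and symmetric-matrix valued (`d ∈ {2,3}`, `L > 0`), one has (with
summation over repeated indices)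
`L ∫ Δu_i ∂_j(∂_i Q_{mn} ∂_j Q_{nm}) dx − L ∫ ΔQ : Δ((u·∇)Q) dx
  = 2L ∫ ∂_k(ΔQ) : (u·∇)(∂_k Q) dx`. -/
theorem higher_order_cancellation (d : ℕ) (hd : d = 2 ∨ d = 3)
    (Λ : ℝ) (hΛ : 0 < Λ) (L : ℝ) (hL : 0 < L)
    (u : (Fin d → ℝ) → (Fin d → ℝ)) (hu : ContDiff ℝ (⊤ : ℕ∞) u)
    (huper : IsCubePeriodic Λ u)
    (hdiv : ∀ x, ∑ i : Fin d, pderiv' i u x i = 0)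
    (Q : (Fin d → ℝ) → Matrix (Fin d) (Fin d) ℝ) (hQ : ContDiff ℝ (⊤ : ℕ∞) Q)
    (hQper : IsCubePeriodic Λ Q) (hQsym : ∀ x, (Q x)ᵀ = Q x) :
    L * (∫ x in cube d Λ,
          ∑ i : Fin d, ∑ j : Fin d, lap' u x i *
            pderiv' j (fun y => ∑ m : Fin d, ∑ n : Fin d,
              pderiv' i Q y m n * pderiv' j Q y n m) x)
      - L * (∫ x in cube d Λ,
          ((lap' Q x)ᵀ * lap' (fun y => ∑ i : Fin d, u y i • pderiv' i Q y) x).trace)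
      = 2 * L * ∫ x in cube d Λ,
          ∑ k : Fin d,
            ((pderiv' k (fun y => lap' Q y) x)ᵀ *
              (∑ i : Fin d, u x i • pderiv' i (fun y => pderiv' k Q y) x)).trace := by
  obtain ⟨n, rfl⟩ : ∃ n, d = n + 1 := by
    rcases hd with h | h
    · exact ⟨1, h⟩
    · exact ⟨2, h⟩
  have hΛ0 : 0 ≤ Λ := hΛ.le
  have hv : ∀ i : Fin (n+1), ContDiff ℝ (⊤:ℕ∞) (fun y => u y i) := fun i => contDiff_pi.mp hu i
  have hq : ∀ m k : Fin (n+1), ContDiff ℝ (⊤:ℕ∞) (fun y => Q y m k) := fun m k =>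
    ((entryCLM (n+1) m k).contDiff).comp hQ
  have hvp : ∀ i : Fin (n+1), IsCubePeriodic Λ (fun y => u y i) := fun i x j =>
    congrFun (huper x j) i
  have hqp : ∀ m k : Fin (n+1), IsCubePeriodic Λ (fun y => Q y m k) := fun m k x j =>
    congrFun (congrFun (hQper x j) m) k
  have hdiv' : ∀ x : Fin (n+1) → ℝ, ∑ i, pderiv' i (fun y => u y i) x = 0 := by
    intro x
    rw [← hdiv x]
    exact Finset.sum_congr rfl fun i _ =>
      (pderiv'_pi (hu.differentiable (by simp) x) i i).symm
  have hsym : ∀ (y : Fin (n+1) → ℝ) (m k : Fin (n+1)), Q y k m = Q y m k := fun y m k =>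
    congrFun (congrFun (hQsym y) m) k
  have hud : ∀ x : Fin (n+1) → ℝ, DifferentiableAt ℝ u x := fun x =>
    hu.differentiable (by simp) x
  have hQd : ∀ x : Fin (n+1) → ℝ, DifferentiableAt ℝ Q x := fun x =>
    hQ.differentiable (by simp) x
  have key := core_main (v := fun i y => u y i) (q := fun m k y => Q y m k)
    hΛ0 hv hvp hdiv' hq hqp
  -- conversion 1
  have hpt1 : ∀ x : Fin (n+1) → ℝ,
      (∑ i, ∑ j, lap' u x i * pderiv' j (fun y => ∑ m, ∑ k,
        pderiv' i Q y m k * pderiv' j Q y k m) x)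
      = ∑ i, ∑ j, lap' (fun y => u y i) x * pderiv' j (fun y => ∑ m, ∑ k,
          pderiv' i (fun z => Q z m k) y * pderiv' j (fun z => Q z m k) y) x := by
    intro x
    refine Finset.sum_congr rfl fun i _ => Finset.sum_congr rfl fun j _ => ?_
    rw [lap'_pi hu i x]
    congr 1
    congr 1
    funext y
    refine Finset.sum_congr rfl fun m _ => Finset.sum_congr rfl fun k _ => ?_
    rw [pderiv'_entry (hQd y) i m k, pderiv'_entry (hQd y) j k m]
    congr 1
    congr 1
    funext z
    exact hsym z m k
  -- conversion 2
  have hW : ContDiff ℝ (⊤:ℕ∞) (fun y => ∑ i, u y i • pderiv' i Q y) :=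
    ContDiff.sum fun i _ => (hv i).smul (hQ.pderiv' i)
  have hpt2 : ∀ x : Fin (n+1) → ℝ,
      ((lap' Q x)ᵀ * lap' (fun y => ∑ i, u y i • pderiv' i Q y) x).trace
      = ∑ m, ∑ k, lap' (fun y => Q y m k) x *
          lap' (fun y => ∑ i, u y i * pderiv' i (fun z => Q z m k) y) x := by
    intro x
    rw [trace_transpose_mul']
    refine Finset.sum_congr rfl fun m _ => Finset.sum_congr rfl fun k _ => ?_
    rw [lap'_entry hQ m k x, lap'_entry hW m k x]
    congr 2
    funext y
    rw [Matrix.sum_apply]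
    refine Finset.sum_congr rfl fun i _ => ?_
    simp only [Matrix.smul_apply, Pi.smul_apply, smul_eq_mul]
    rw [pderiv'_entry (hQd y) i m k]
  -- conversion 3
  have hpt3 : ∀ x : Fin (n+1) → ℝ,
      (∑ j, ((pderiv' j (fun y => lap' Q y) x)ᵀ *
        (∑ i, u x i • pderiv' i (fun y => pderiv' j Q y) x)).trace)
      = ∑ j, ∑ m, ∑ k, pderiv' j (lap' (fun y => Q y m k)) x *
          (∑ i, u x i * pderiv' i (pderiv' j (fun z => Q z m k)) x) := by
    intro x
    refine Finset.sum_congr rfl fun j _ => ?_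
    rw [trace_transpose_mul']
    refine Finset.sum_congr rfl fun m _ => Finset.sum_congr rfl fun k _ => ?_
    congr 1
    · rw [pderiv'_entry ((hQ.lap').differentiable (by simp) x) j m k]
      congr 1
      funext y
      exact lap'_entry hQ m k y
    · rw [Matrix.sum_apply]
      refine Finset.sum_congr rfl fun i _ => ?_
      simp only [Matrix.smul_apply, Pi.smul_apply, smul_eq_mul]
      rw [pderiv'_entry ((hQ.pderiv' j).differentiable (by simp) x) i m k]
      congr 1
      congr 1
      funext y
      exact pderiv'_entry (hQd y) j m k
  simp only [hpt1, hpt2, hpt3]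
  linear_combination L * key
end
end
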